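/- Let F be a finite set of reduction operators relative to (G,<) and let C be a set of reduction operators relative to (G,<). Then F ∪ C is a completion of F (i.e. F ∪ C is confluent and ∧(F ∪ C) = ∧F) if and only if obs(F) ⊆ ∪_{T∈C} Red(T) and ∧F ⪯ ∧C. -/
import Mathlib


open Finsupp

variable {K G : Type*} [Field K] [LinearOrder G] [WellFoundedLT G]

/-- `T` is a reduction operator relative to `(G, <)`. -/
def IsRedOp (T : (G →₀ K) →ₗ[K] (G →₀ K)) : Prop :=
  T ∘ₗ T = T ∧
    ∀ g : G, T (single g 1) = single g 1 ∨ (T (single g 1)).support.max < (g : WithBot G)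

/-- The set of `T`-normal forms. -/
def NFset (T : (G →₀ K) →ₗ[K] (G →₀ K)) : Set G :=
  {g | T (single g 1) = single g 1}


lemma map_eq_sum (T : (G →₀ K) →ₗ[K] (G →₀ K)) (v : G →₀ K) :
    T v = ∑ h ∈ v.support, v h • T (single h 1) := by
  conv_lhs => rw [← Finsupp.sum_single v]
  rw [Finsupp.sum, map_sum]
  refine Finset.sum_congr rfl fun h _ => ?_
  rw [← map_smul, Finsupp.smul_single, smul_eq_mul, mul_one]

lemma redop_single_max {T : (G →₀ K) →ₗ[K] (G →₀ K)} (hT : IsRedOp T) (g : G) :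
    (T (single g 1)).support.max ≤ (g : WithBot G) := by
  rcases hT.2 g with h | h
  · rw [h, Finsupp.support_single_ne_zero g one_ne_zero, Finset.max_singleton]
  · exact le_of_lt h

lemma support_max_le {T : (G →₀ K) →ₗ[K] (G →₀ K)} (hT : IsRedOp T) (v : G →₀ K) :
    (T v).support.max ≤ v.support.max := by
  classical
  rw [map_eq_sum]
  refine (Finset.max_le fun a ha => ?_)
  obtain ⟨h, hh, hha⟩ := Finset.mem_biUnion.mp (Finsupp.support_finset_sum ha)
  calc (a : WithBot G) ≤ (T (single h 1)).support.max :=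
        Finset.le_max (Finsupp.support_smul hha)
    _ ≤ (h : WithBot G) := redop_single_max hT h
    _ ≤ v.support.max := Finset.le_max hh

lemma redop_idem {T : (G →₀ K) →ₗ[K] (G →₀ K)} (hT : IsRedOp T) (v : G →₀ K) :
    T (T v) = T v := by
  have := congrArg (fun f => f v) hT.1
  simpa using this

lemma NF_mono {T₁ T₂ : (G →₀ K) →ₗ[K] (G →₀ K)} (h₁ : IsRedOp T₁) (h₂ : IsRedOp T₂)
    (hker : LinearMap.ker T₁ ≤ LinearMap.ker T₂) : NFset T₂ ⊆ NFset T₁ := by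
  intro g hg
  by_contra hng
  have hmax : (T₁ (single g 1)).support.max < (g : WithBot G) := (h₁.2 g).resolve_left hng
  have hk : single g 1 - T₁ (single g 1) ∈ LinearMap.ker T₁ := by
    simp [LinearMap.mem_ker, redop_idem h₁]
  have h2 : T₂ (single g 1) = T₂ (T₁ (single g 1)) := by
    have := hker hk
    rw [LinearMap.mem_ker, map_sub, sub_eq_zero] at this
    exact this
  have : (T₂ (single g 1)).support.max < (g : WithBot G) :=
    lt_of_le_of_lt (h2 ▸ support_max_le h₂ (T₁ (single g 1))) hmax
  rw [hg, Finsupp.support_single_ne_zero g one_ne_zero, Finset.max_singleton] at this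
  exact lt_irrefl _ this

lemma redop_ext {T₁ T₂ : (G →₀ K) →ₗ[K] (G →₀ K)} (h₁ : IsRedOp T₁) (h₂ : IsRedOp T₂)
    (hker : LinearMap.ker T₁ = LinearMap.ker T₂) : T₁ = T₂ := by
  have key : ∀ g : G, T₁ (single g 1) = T₂ (single g 1) := by
    intro g
    induction g using WellFoundedLT.induction with
    | _ g IH =>
      rcases h₁.2 g with hfix | hmax
      · have hgNF : g ∈ NFset T₁ := hfix
        have : g ∈ NFset T₂ := NF_mono h₂ h₁ (le_of_eq hker.symm) hgNF
        rw [hfix, this]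
      · set w := T₁ (single g 1) with hw
        have hww : T₂ w = T₁ w := by
          rw [map_eq_sum T₁ w, map_eq_sum T₂ w]
          refine Finset.sum_congr rfl fun h hh => ?_
          have : (h : WithBot G) < (g : WithBot G) := lt_of_le_of_lt (Finset.le_max hh) hmax
          rw [IH h (by exact_mod_cast this)]
        have hT1w : T₁ w = w := redop_idem h₁ _
        have hk : single g 1 - w ∈ LinearMap.ker T₂ := by
          rw [← hker]
          simp [LinearMap.mem_ker, hw, redop_idem h₁]
        rw [LinearMap.mem_ker, map_sub, sub_eq_zero] at hk
        rw [hk, hww, hT1w]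
  refine Finsupp.lhom_ext fun a b => ?_
  have : (single a b : G →₀ K) = b • single a 1 := by
    rw [Finsupp.smul_single, smul_eq_mul, mul_one]
  rw [this, map_smul, map_smul, key a]

/-- Characterisation of completions: with `WF = ∧F`, `WC = ∧C` and `WFC = ∧(F ∪ C)`,
the set `F ∪ C` is a completion of `F` (it is confluent, i.e. `NF(F ∪ C) = NF(∧(F ∪ C))`,
and `∧(F ∪ C) = ∧F`) if and only if `obs(F) ⊆ ∪_{S ∈ C} Red(S)` and `∧F ⪯ ∧C`
(i.e. `ker WC ⊆ ker WF`). -/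
theorem completion_characterisation (n : ℕ)
    (T : Fin n → (G →₀ K) →ₗ[K] (G →₀ K)) (hT : ∀ i, IsRedOp (T i))
    (C : Set ((G →₀ K) →ₗ[K] (G →₀ K))) (hC : ∀ S ∈ C, IsRedOp S)
    (WF WC WFC : (G →₀ K) →ₗ[K] (G →₀ K))
    (hWF : IsRedOp WF) (hWC : IsRedOp WC) (hWFC : IsRedOp WFC)
    (hWFker : LinearMap.ker WF = ⨆ i, LinearMap.ker (T i))
    (hWCker : LinearMap.ker WC = ⨆ S ∈ C, LinearMap.ker S)
    (hWFCker : LinearMap.ker WFC =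
      (⨆ i, LinearMap.ker (T i)) ⊔ ⨆ S ∈ C, LinearMap.ker S) :
    (((⋂ i, NFset (T i)) ∩ ⋂ S ∈ C, NFset S) = NFset WFC ∧ WFC = WF) ↔
      ((⋂ i, NFset (T i)) \ NFset WF ⊆ ⋃ S ∈ C, (NFset S)ᶜ ∧
        LinearMap.ker WC ≤ LinearMap.ker WF) := by
  constructor
  · rintro ⟨hconf, heq⟩
    constructor
    · intro g hg
      by_contra hng
      simp only [Set.mem_iUnion, Set.mem_compl_iff, not_exists, not_not] at hng
      have hgC : g ∈ ⋂ S ∈ C, NFset S := by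
        simp only [Set.mem_iInter]; exact fun S hS => hng S hS
      have hmem : g ∈ NFset WFC := hconf ▸ ⟨hg.1, hgC⟩
      rw [heq] at hmem
      exact hg.2 hmem
    · have h1 : LinearMap.ker WFC = LinearMap.ker WF := by rw [heq]
      rw [hWFCker, hWFker] at h1
      rw [hWCker, hWFker, ← h1]
      exact le_sup_right
  · rintro ⟨hobs, hkerle⟩
    have hkC : (⨆ S ∈ C, LinearMap.ker S) ≤ ⨆ i, LinearMap.ker (T i) := by
      rw [← hWCker, ← hWFker]; exact hkerle
    have hkereq : LinearMap.ker WFC = LinearMap.ker WF := by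
      rw [hWFCker, hWFker, sup_eq_left.mpr hkC]
    have heq : WFC = WF := redop_ext hWFC hWF hkereq
    refine ⟨?_, heq⟩
    ext g
    constructor
    · rintro ⟨hgF, hgC⟩
      by_contra hng
      have hobs' : g ∈ (⋂ i, NFset (T i)) \ NFset WF :=
        ⟨hgF, fun h => hng (show WFC (single g 1) = single g 1 by rw [heq]; exact h)⟩
      have := hobs hobs'
      simp only [Set.mem_iUnion, Set.mem_compl_iff] at this
      obtain ⟨S, hS, hred⟩ := this
      exact hred (Set.mem_iInter₂.mp hgC S hS)
    · intro hg
      refine ⟨?_, ?_⟩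
      · simp only [Set.mem_iInter]
        intro i
        exact NF_mono (hT i) hWFC
          (by rw [hWFCker]; exact le_sup_of_le_left (le_iSup (fun i => LinearMap.ker (T i)) i)) hg
      · simp only [Set.mem_iInter]
        intro S hS
        exact NF_mono (hC S hS) hWFC
          (by rw [hWFCker]; exact le_sup_of_le_right (le_iSup₂ (f := fun S _ => LinearMap.ker S) S hS)) hg
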